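/- Let c₁ > 0 and c₂ ∈ ℝ, and define k : ℝ → ℝ by k(s) = c₁/(c₁²·(c₂ + s)² + 1). Then k is positive, non-constant, and satisfies (3/4)·k'(s)² − (1/2)·k''(s)·k(s) − k(s)⁴ = 0 for every s ∈ ℝ. -/

import Mathlib

/-- On the flat plane (K = 0), `k(s) = c₁/(c₁²(c₂+s)² + 1)` is positive, non-constant
and satisfies `(3/4)k'² − (1/2)k'' k − k⁴ = 0`. -/
theorem stmt_5 (c₁ c₂ : ℝ) (hc₁ : 0 < c₁)
    (k : ℝ → ℝ) (hk : k = fun s => c₁ / (c₁ ^ 2 * (c₂ + s) ^ 2 + 1)) :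
    (∀ s, 0 < k s) ∧ (∃ s t : ℝ, k s ≠ k t) ∧
      ∀ s, 3 / 4 * (deriv k s) ^ 2 - 1 / 2 * deriv (deriv k) s * k s - (k s) ^ 4 = 0 := by
  have hQ : ∀ s : ℝ, (0:ℝ) < c₁ ^ 2 * (c₂ + s) ^ 2 + 1 := fun s => by positivity
  have hQne : ∀ s : ℝ, c₁ ^ 2 * (c₂ + s) ^ 2 + 1 ≠ 0 := fun s => (hQ s).ne'
  subst hk
  have hdQ : ∀ s : ℝ, HasDerivAt (fun s : ℝ => c₁ ^ 2 * (c₂ + s) ^ 2 + 1)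
      (c₁ ^ 2 * (2 * (c₂ + s))) s := by
    intro s
    have h1 : HasDerivAt (fun s : ℝ => c₂ + s) 1 s := (hasDerivAt_id s).const_add c₂
    have h2 := (h1.pow 2).const_mul (c₁ ^ 2)
    have h3 := h2.add_const 1
    exact h3.congr_deriv (by ring)
  have hd1 : ∀ s : ℝ, HasDerivAt (fun s : ℝ => c₁ / (c₁ ^ 2 * (c₂ + s) ^ 2 + 1))
      (-2 * c₁ ^ 3 * (c₂ + s) / (c₁ ^ 2 * (c₂ + s) ^ 2 + 1) ^ 2) s := by
    intro s
    have := (hasDerivAt_const s c₁).div (hdQ s) (hQne s)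
    exact this.congr_deriv (by field_simp; ring)
  have hD1 : deriv (fun s : ℝ => c₁ / (c₁ ^ 2 * (c₂ + s) ^ 2 + 1)) =
      fun s : ℝ => -2 * c₁ ^ 3 * (c₂ + s) / (c₁ ^ 2 * (c₂ + s) ^ 2 + 1) ^ 2 :=
    funext fun s => (hd1 s).deriv
  have hd2 : ∀ s : ℝ, HasDerivAt
      (fun s : ℝ => -2 * c₁ ^ 3 * (c₂ + s) / (c₁ ^ 2 * (c₂ + s) ^ 2 + 1) ^ 2)
      ((-2 * c₁ ^ 3 * (c₁ ^ 2 * (c₂ + s) ^ 2 + 1) ^ 2 -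
        (-2 * c₁ ^ 3 * (c₂ + s)) * (2 * (c₁ ^ 2 * (c₂ + s) ^ 2 + 1) * (c₁ ^ 2 * (2 * (c₂ + s)))))
        / ((c₁ ^ 2 * (c₂ + s) ^ 2 + 1) ^ 2) ^ 2) s := by
    intro s
    have hnum : HasDerivAt (fun s : ℝ => -2 * c₁ ^ 3 * (c₂ + s)) (-2 * c₁ ^ 3) s := by
      have := ((hasDerivAt_id s).const_add c₂).const_mul (-2 * c₁ ^ 3)
      exact this.congr_deriv (by ring)
    have hden : HasDerivAt (fun s : ℝ => (c₁ ^ 2 * (c₂ + s) ^ 2 + 1) ^ 2)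
        (2 * (c₁ ^ 2 * (c₂ + s) ^ 2 + 1) * (c₁ ^ 2 * (2 * (c₂ + s)))) s := by
      have := (hdQ s).pow 2
      exact this.congr_deriv (by ring)
    exact hnum.div hden (pow_ne_zero 2 (hQne s))
  refine ⟨fun s => div_pos hc₁ (hQ s), ⟨-c₂, -c₂ + 1 / c₁, ?_⟩, ?_⟩
  · have e1 : c₂ + -c₂ = (0:ℝ) := by ring
    have e2 : c₂ + (-c₂ + 1 / c₁) = 1 / c₁ := by ring
    simp only [e1, e2]
    have h1 : c₁ ^ 2 * (0:ℝ) ^ 2 + 1 = 1 := by ring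
    have h2 : c₁ ^ 2 * (1 / c₁) ^ 2 + 1 = 2 := by field_simp; ring
    rw [h1, h2]
    intro h
    rw [div_one] at h
    nlinarith
  · intro s
    rw [hD1]
    rw [show deriv (fun s : ℝ => -2 * c₁ ^ 3 * (c₂ + s) / (c₁ ^ 2 * (c₂ + s) ^ 2 + 1) ^ 2) s
      = _ from (hd2 s).deriv]
    field_simp
    ring
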